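/- Let p be an odd prime, L₀^♯ a nondegenerate quadratic space over ℚ_p containing an anisotropic vector x₀ with Q(x₀) ∈ ℤ_p^× (up to a unit normalization), and L₀ the orthogonal complement of x₀. If Λ is a vertex lattice in L₀ (i.e. pΛ ⊆ Λ^∨ ⊆ Λ), then Λ^♯ := Λ ⊕ ℤ_p(p⁻¹x₀) is a vertex lattice in L₀^♯ (i.e. pΛ^♯ ⊆ (Λ^♯)^∨ ⊆ Λ^♯), and its type satisfies t(Λ^♯) = t(Λ) + 1, where the type of a vertex lattice M is length_{ℤ_p}(M/M^∨). -/

import Mathlib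

set_option maxHeartbeats 4000000
set_option synthInstance.maxHeartbeats 2000000


/-- The dual lattice of a `ℤ_p`-lattice `Λ` inside the `ℚ_p`-subspace `L` of `W`,
with respect to the bilinear form `[v,w] = polar Q v w`:
`Λ^∨ = {v ∈ L : [v, Λ] ⊆ ℤ_p}`. -/
noncomputable def dualLattice {p : ℕ} [Fact p.Prime] {W : Type*} [AddCommGroup W]
    [Module ℚ_[p] W] [Module ℤ_[p] W] [IsScalarTower ℤ_[p] ℚ_[p] W]
    (Q : QuadraticForm ℚ_[p] W) (L : Submodule ℚ_[p] W) (Λ : Submodule ℤ_[p] W) :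
    Submodule ℤ_[p] W :=
  L.restrictScalars ℤ_[p] ⊓
    ⨅ w ∈ Λ, Submodule.comap
      (((QuadraticMap.polarBilin Q).flip w).restrictScalars ℤ_[p])
      (1 : Submodule ℤ_[p] ℚ_[p])

/-- `Λ` is a vertex lattice in the subspace `L`: a full `ℤ_p`-lattice in `L` with
`pΛ ⊆ Λ^∨ ⊆ Λ` (duals taken inside `L`). -/
def IsVertexLattice {p : ℕ} [Fact p.Prime] {W : Type*} [AddCommGroup W]
    [Module ℚ_[p] W] [Module ℤ_[p] W] [IsScalarTower ℤ_[p] ℚ_[p] W]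
    (Q : QuadraticForm ℚ_[p] W) (L : Submodule ℚ_[p] W) (Λ : Submodule ℤ_[p] W) : Prop :=
  (Λ : Set W) ⊆ (L : Set W) ∧ Submodule.span ℚ_[p] (Λ : Set W) = L ∧
  (∀ v ∈ Λ, (p : ℤ_[p]) • v ∈ dualLattice Q L Λ) ∧ dualLattice Q L Λ ≤ Λ

/-- The orthogonal complement of `x₀` with respect to the polar form of `Q`. -/
noncomputable def perpSpace {p : ℕ} [Fact p.Prime] {W : Type*} [AddCommGroup W]
    [Module ℚ_[p] W] (Q : QuadraticForm ℚ_[p] W) (x₀ : W) : Submodule ℚ_[p] W :=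
  LinearMap.BilinForm.orthogonal (QuadraticMap.polarBilin Q) (Submodule.span ℚ_[p] {x₀})

section Helpers

variable {p : ℕ} [Fact p.Prime] {W : Type*} [AddCommGroup W]
    [Module ℚ_[p] W] [Module ℤ_[p] W] [IsScalarTower ℤ_[p] ℚ_[p] W]

lemma mem_dualLattice (Q : QuadraticForm ℚ_[p] W) (L : Submodule ℚ_[p] W)
    (Λ : Submodule ℤ_[p] W) {v : W} :
    v ∈ dualLattice Q L Λ ↔ v ∈ L ∧ ∀ w ∈ Λ, ∃ z : ℤ_[p],
      (z : ℚ_[p]) = QuadraticMap.polar Q v w := by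
  simp only [dualLattice, Submodule.mem_inf, Submodule.restrictScalars_mem, Submodule.mem_iInf,
    Submodule.mem_comap, LinearMap.coe_restrictScalars, LinearMap.flip_apply,
    QuadraticMap.polarBilin_apply_apply, Submodule.mem_one]
  rfl

lemma toZMod_surj : Function.Surjective (PadicInt.toZMod (p := p)) := by
  intro r
  obtain ⟨n, rfl⟩ := ZMod.natCast_rightInverse.surjective r
  exact ⟨(n : ℤ_[p]), map_natCast _ n⟩

lemma card_quot_span_p : Nat.card (ℤ_[p] ⧸ (Submodule.span ℤ_[p] {(p : ℤ_[p])})) = p := by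
  have h1 : (Submodule.span ℤ_[p] {(p : ℤ_[p])}) =
      RingHom.ker (PadicInt.toZMod (p := p)) := by
    rw [PadicInt.ker_toZMod, PadicInt.maximalIdeal_eq_span_p]
  rw [Nat.card_congr ((Submodule.quotEquivOfEq _ _ h1).toEquiv.trans
    (RingHom.quotientKerEquivOfSurjective toZMod_surj).toEquiv), Nat.card_zmod]

end Helpers

/-- Let `L₀^♯ = W` be a nondegenerate quadratic space over `ℚ_p` (`p` odd),
`x₀ ∈ W` with `[x₀,x₀] ∈ p·ℤ_p^×`, and `L₀ = x₀^⊥`.  If `Λ` is a vertex lattice in `L₀`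
of type `t` (the type is encoded by `#(Λ/Λ^∨) = p^t`), then
`Λ^♯ := Λ ⊕ ℤ_p (p⁻¹ x₀)` is a vertex lattice in `L₀^♯` of type `t + 1`. -/
theorem stmt_5 (p : ℕ) [Fact p.Prime] (hp : p ≠ 2)
    (W : Type*) [AddCommGroup W] [Module ℚ_[p] W] [Module ℤ_[p] W]
    [IsScalarTower ℤ_[p] ℚ_[p] W] [FiniteDimensional ℚ_[p] W]
    (Q : QuadraticForm ℚ_[p] W) (hQ : (QuadraticMap.polarBilin Q).Nondegenerate)
    (x₀ : W)
    (hx₀ : ∃ u : ℤ_[p]ˣ, QuadraticMap.polar Q x₀ x₀ = (p : ℚ_[p]) * ((u : ℤ_[p]) : ℚ_[p]))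
    (Λ : Submodule ℤ_[p] W) (hΛ : IsVertexLattice Q (perpSpace Q x₀) Λ)
    (t : ℕ)
    (ht : Nat.card
      (↥Λ ⧸ (dualLattice Q (perpSpace Q x₀) Λ).comap Λ.subtype) = p ^ t) :
    IsVertexLattice Q ⊤ (Λ ⊔ Submodule.span ℤ_[p] {(p : ℚ_[p])⁻¹ • x₀}) ∧
    Nat.card
      (↥(Λ ⊔ Submodule.span ℤ_[p] {(p : ℚ_[p])⁻¹ • x₀}) ⧸
        (dualLattice Q ⊤ (Λ ⊔ Submodule.span ℤ_[p] {(p : ℚ_[p])⁻¹ • x₀})).comap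
          (Λ ⊔ Submodule.span ℤ_[p] {(p : ℚ_[p])⁻¹ • x₀}).subtype) = p ^ (t + 1) := by
  obtain ⟨u, hu⟩ := hx₀
  have hp0 : (p : ℚ_[p]) ≠ 0 := Nat.cast_ne_zero.mpr (Fact.out (p := p.Prime)).ne_zero
  have huQ : ((u : ℤ_[p]) : ℚ_[p]) ≠ 0 := PadicInt.coe_ne_zero.mpr u.ne_zero
  set B := QuadraticMap.polarBilin Q with hBdef
  set y : W := (p : ℚ_[p])⁻¹ • x₀ with hydef
  set L₀ := perpSpace Q x₀ with hL₀def
  set Λs := Λ ⊔ Submodule.span ℤ_[p] {y} with hΛsdef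
  set D₀ := dualLattice Q L₀ Λ with hD₀def
  set D := dualLattice Q ⊤ Λs with hDdef
  have hB : ∀ a b : W, B a b = QuadraticMap.polar Q a b := fun a b =>
    QuadraticMap.polarBilin_apply_apply Q a b
  have hsymm : ∀ a b : W, B a b = B b a := by
    intro a b; rw [hB, hB]; exact QuadraticMap.polar_comm _ a b
  have hBx₀x₀ : B x₀ x₀ = (p : ℚ_[p]) * ((u : ℤ_[p]) : ℚ_[p]) := by rw [hB]; exact hu
  have hBx₀y : B x₀ y = ((u : ℤ_[p]) : ℚ_[p]) := by
    rw [hydef, map_smul, smul_eq_mul, hBx₀x₀]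
    field_simp
  have hByy : B y y = ((u : ℤ_[p]) : ℚ_[p]) * (p : ℚ_[p])⁻¹ := by
    simp only [hydef, map_smul, LinearMap.smul_apply, smul_eq_mul, hBx₀x₀]
    field_simp
  have hmemL₀ : ∀ v : W, v ∈ L₀ ↔ B x₀ v = 0 := by
    intro v
    rw [hL₀def, perpSpace, LinearMap.BilinForm.mem_orthogonal_iff]
    constructor
    · intro h; exact h x₀ (Submodule.mem_span_singleton_self x₀)
    · intro h n hn
      obtain ⟨c, rfl⟩ := Submodule.mem_span_singleton.mp hn
      show B (c • x₀) v = 0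
      rw [map_smul, LinearMap.smul_apply, h, smul_zero]
  have hsmulZ : ∀ (z : ℤ_[p]) (w : W), z • w = ((z : ℚ_[p])) • w :=
    fun z w => (algebraMap_smul ℚ_[p] z w).symm
  have hpZ : (((p : ℤ_[p]) : ℚ_[p])) = (p : ℚ_[p]) := by push_cast; ring
  -- the projection functionals
  set ψ : W → ℚ_[p] := fun d => (((u⁻¹ : ℤ_[p]ˣ) : ℤ_[p]) : ℚ_[p]) * B x₀ d with hψdef
  set π : W → W := fun d => d - ψ d • y with hπdef
  have huu : (((u⁻¹ : ℤ_[p]ˣ) : ℤ_[p]) : ℚ_[p]) * ((u : ℤ_[p]) : ℚ_[p]) = 1 := by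
    have := u.inv_mul
    have h2 : (((u⁻¹ : ℤ_[p]ˣ) : ℤ_[p]) * ((u : ℤ_[p])) : ℤ_[p]) = 1 := this
    exact_mod_cast congrArg (fun z : ℤ_[p] => (z : ℚ_[p])) h2
  have hψadd : ∀ a b : W, ψ (a + b) = ψ a + ψ b := by
    intro a b; simp only [hψdef, map_add]; ring
  have hψsmul : ∀ (c : ℚ_[p]) (a : W), ψ (c • a) = c * ψ a := by
    intro c a; simp only [hψdef, map_smul, smul_eq_mul]; ring
  have hψy : ψ y = 1 := by rw [hψdef]; simp only [hBx₀y]; exact huu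
  have hψL₀ : ∀ v ∈ L₀, ψ v = 0 := by
    intro v hv; rw [hψdef]; simp only [(hmemL₀ v).mp hv, mul_zero]
  have hπL₀ : ∀ d : W, π d ∈ L₀ := by
    intro d
    rw [hmemL₀]
    simp only [hπdef, map_sub, map_smul, smul_eq_mul, hBx₀y, hψdef]
    linear_combination (-(B x₀ d)) * huu
  have hid : ∀ d : W, π d + ψ d • y = d := by
    intro d; simp only [hπdef]; exact sub_add_cancel d (ψ d • y)
  have hπadd : ∀ a b : W, π (a + b) = π a + π b := by
    intro a b; simp only [hπdef, hψadd, add_smul]; abel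
  have hπsmulQ : ∀ (c : ℚ_[p]) (d : W), π (c • d) = c • π d := by
    intro c d; simp only [hπdef, hψsmul, smul_sub, mul_smul]
  have hlperp : ∀ l ∈ Λ, B x₀ l = 0 := fun l hl => (hmemL₀ l).mp (hΛ.1 hl)
  have hyL₀ : ∀ v ∈ L₀, B v y = 0 := by
    intro v hv
    rw [hsymm, hydef, map_smul, LinearMap.smul_apply, smul_eq_mul, (hmemL₀ v).mp hv, mul_zero]
  have hψdec : ∀ l ∈ Λ, ∀ a : ℤ_[p], ψ (l + a • y) = (a : ℚ_[p]) ∧ π (l + a • y) = l := by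
    intro l hl a
    have h1 : ψ (l + a • y) = (a : ℚ_[p]) := by
      rw [hψadd, hψL₀ l (hΛ.1 hl), hsmulZ, hψsmul, hψy, mul_one, zero_add]
    refine ⟨h1, ?_⟩
    rw [hπdef]; simp only [h1]
    rw [hsmulZ a y]; abel
  have hmemSharp : ∀ d : W, d ∈ Λs ↔ π d ∈ Λ ∧ ∃ a : ℤ_[p], (a : ℚ_[p]) = ψ d := by
    intro d
    constructor
    · intro hd
      obtain ⟨l, hl, z, hz, rfl⟩ := Submodule.mem_sup.mp hd
      obtain ⟨a, rfl⟩ := Submodule.mem_span_singleton.mp hz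
      obtain ⟨h1, h2⟩ := hψdec l hl a
      exact ⟨by rw [h2]; exact hl, a, h1.symm⟩
    · rintro ⟨hπd, a, ha⟩
      rw [← hid d]
      apply Submodule.add_mem_sup hπd
      rw [← ha, ← hsmulZ]
      exact Submodule.mem_span_singleton.mpr ⟨a, rfl⟩
  have hyΛs : y ∈ Λs := Submodule.mem_sup_right (Submodule.mem_span_singleton_self y)
  have hΛΛs : ∀ l ∈ Λ, l ∈ Λs := fun l hl => Submodule.mem_sup_left hl
  -- membership in the big dual
  have hByl : ∀ l ∈ Λ, B y l = 0 := fun l hl => by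
    rw [hsymm]; exact hyL₀ l (hΛ.1 hl)
  have hBdl : ∀ (d l : W), l ∈ Λ → B d l = B (π d) l := by
    intro d l hl
    conv_lhs => rw [← hid d]
    rw [map_add, LinearMap.add_apply, map_smul, LinearMap.smul_apply, smul_eq_mul,
      hByl l hl, mul_zero, add_zero]
  have hBdy : ∀ d : W, B d y = ψ d * (((u : ℤ_[p]) : ℚ_[p]) * (p : ℚ_[p])⁻¹) := by
    intro d
    conv_lhs => rw [← hid d]
    rw [map_add, LinearMap.add_apply, hyL₀ _ (hπL₀ d), zero_add,
      map_smul B (ψ d) y, LinearMap.smul_apply, smul_eq_mul, hByy]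
  have hpp : (p : ℚ_[p]) * (p : ℚ_[p])⁻¹ = 1 := mul_inv_cancel₀ hp0
  have hD₀mem : ∀ v : W, v ∈ D₀ ↔ v ∈ L₀ ∧ ∀ l ∈ Λ, ∃ z : ℤ_[p],
      (z : ℚ_[p]) = B v l := by
    intro v; rw [hD₀def, mem_dualLattice]
    simp only [← hB, ← hL₀def]
  have hDmem : ∀ v : W, v ∈ D ↔ ∀ w ∈ Λs, ∃ z : ℤ_[p], (z : ℚ_[p]) = B v w := by
    intro v; rw [hDdef, mem_dualLattice]
    simp only [← hB, Submodule.mem_top, true_and]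
  have hmemD : ∀ d : W, d ∈ D ↔ π d ∈ D₀ ∧
      ∃ c : ℤ_[p], (((p : ℤ_[p]) * c : ℤ_[p]) : ℚ_[p]) = ψ d := by
    intro d
    rw [hDmem, hD₀mem]
    constructor
    · intro h
      obtain ⟨z, hz⟩ := h y hyΛs
      rw [hBdy d] at hz
      refine ⟨⟨hπL₀ d, ?_⟩, ?_⟩
      · intro l hl
        obtain ⟨z₁, hz₁⟩ := h l (hΛΛs l hl)
        exact ⟨z₁, by rw [← hBdl d l hl]; exact hz₁⟩
      · refine ⟨z * ((u⁻¹ : ℤ_[p]ˣ) : ℤ_[p]), ?_⟩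
        push_cast
        linear_combination ((p : ℚ_[p]) * (((u⁻¹ : ℤ_[p]ˣ) : ℤ_[p]) : ℚ_[p])) * hz +
          (ψ d * (p : ℚ_[p]) * (p : ℚ_[p])⁻¹) * huu + (ψ d) * hpp
    · rintro ⟨⟨hπdL₀, hπint⟩, c, hc⟩
      intro w hw
      obtain ⟨l, hl, zz, hzz, rfl⟩ := Submodule.mem_sup.mp hw
      obtain ⟨a, rfl⟩ := Submodule.mem_span_singleton.mp hzz
      obtain ⟨z₁, hz₁⟩ := hπint l hl
      have hBdy2 : B d y = (c : ℚ_[p]) * ((u : ℤ_[p]) : ℚ_[p]) := by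
        rw [hBdy d, ← hc]
        push_cast
        linear_combination ((c : ℚ_[p]) * (((u : ℤ_[p]) : ℚ_[p]))) * hpp
      refine ⟨z₁ + a * (c * u), ?_⟩
      rw [map_add, hsmulZ, map_smul, smul_eq_mul, hBdl d l hl, hBdy2, ← hz₁]
      push_cast
      ring
  have hD₀Λ : D₀ ≤ Λ := hΛ.2.2.2
  have hDΛs : D ≤ Λs := by
    intro d hd
    obtain ⟨h1, c, hc⟩ := (hmemD d).mp hd
    exact (hmemSharp d).mpr ⟨hD₀Λ h1, (p : ℤ_[p]) * c, hc⟩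
  have hpΛsD : ∀ v ∈ Λs, (p : ℤ_[p]) • v ∈ D := by
    intro v hv
    obtain ⟨hπv, a, ha⟩ := (hmemSharp v).mp hv
    rw [hmemD]
    constructor
    · have : π ((p : ℤ_[p]) • v) = (p : ℤ_[p]) • π v := by
        rw [hsmulZ, hπsmulQ, ← hsmulZ]
      rw [this]
      exact hΛ.2.2.1 (π v) hπv
    · refine ⟨a, ?_⟩
      rw [hsmulZ, hψsmul, ← ha]
      push_cast [hpZ]
      ring
  -- span over ℚ_p
  have hx0ne : ¬ (B.IsOrtho x₀ x₀) :=
    fun h => mul_ne_zero hp0 huQ (by rw [← hBx₀x₀]; exact h)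
  have hcompl := LinearMap.BilinForm.isCompl_span_singleton_orthogonal hx0ne
  have hspan : Submodule.span ℚ_[p] (Λs : Set W) = ⊤ := by
    rw [eq_top_iff, ← hcompl.sup_eq_top]
    apply sup_le
    · rw [Submodule.span_singleton_le_iff_mem]
      have hy' : y ∈ Submodule.span ℚ_[p] (Λs : Set W) := Submodule.subset_span hyΛs
      have : x₀ = (p : ℚ_[p]) • y := by
        rw [hydef, smul_smul, mul_inv_cancel₀ hp0, one_smul]
      rw [this]
      exact Submodule.smul_mem _ _ hy'
    · have hLeq : LinearMap.BilinForm.orthogonal B (Submodule.span ℚ_[p] {x₀}) = L₀ := rfl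
      rw [hLeq, ← hΛ.2.1]
      exact Submodule.span_mono (SetLike.coe_subset_coe.mpr le_sup_left)
  have hVertex : IsVertexLattice Q ⊤ Λs := ⟨by simp, hspan, hpΛsD, hDΛs⟩
  refine ⟨hVertex, ?_⟩
  -- cardinality
  have hintf : ∀ w : Λs, ‖ψ (w : W)‖ ≤ 1 := by
    intro w
    obtain ⟨-, a, ha⟩ := (hmemSharp w.1).mp w.2
    rw [← ha]; exact a.property
  set f : Λs →ₗ[ℤ_[p]] ℤ_[p] :=
    { toFun := fun w => ⟨ψ w.1, hintf w⟩
      map_add' := fun w₁ w₂ => Subtype.ext (hψadd w₁.1 w₂.1)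
      map_smul' := fun z w => Subtype.ext (by
        show ψ (z • (w : W)) = ((z * (show ℤ_[p] from ⟨ψ w.1, hintf w⟩) : ℤ_[p]) : ℚ_[p])
        rw [PadicInt.coe_mul, hsmulZ z (w : W), hψsmul]) } with hfdef
  set πΛ : Λs →ₗ[ℤ_[p]] Λ :=
    { toFun := fun w => ⟨π w.1, ((hmemSharp w.1).mp w.2).1⟩
      map_add' := fun w₁ w₂ => Subtype.ext (hπadd w₁.1 w₂.1)
      map_smul' := fun z w => Subtype.ext (by
        show π (z • (w : W)) = z • π (w : W)
        rw [hsmulZ z (w : W), hπsmulQ]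
        exact (hsmulZ z (π (w : W))).symm) } with hπΛdef
  set Dc := (D₀.comap Λ.subtype) with hDcdef
  set Pq := Submodule.span ℤ_[p] {(p : ℤ_[p])} with hPqdef
  set Φ : Λs →ₗ[ℤ_[p]] (↥Λ ⧸ Dc) × (ℤ_[p] ⧸ Pq) :=
    LinearMap.prod (Dc.mkQ.comp πΛ) (Pq.mkQ.comp f) with hΦdef
  have hsurj : Function.Surjective Φ := by
    rintro ⟨q, r⟩
    obtain ⟨l, rfl⟩ := Dc.mkQ_surjective q
    obtain ⟨m, rfl⟩ := Pq.mkQ_surjective r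
    have hmem : (l : W) + m • y ∈ Λs :=
      Submodule.add_mem_sup l.2 (Submodule.mem_span_singleton.mpr ⟨m, rfl⟩)
    refine ⟨⟨(l : W) + m • y, hmem⟩, ?_⟩
    obtain ⟨h1, h2⟩ := hψdec l.1 l.2 m
    apply Prod.ext
    · show Dc.mkQ (πΛ ⟨_, hmem⟩) = Dc.mkQ l
      congr 1
      exact Subtype.ext h2
    · show Pq.mkQ (f ⟨_, hmem⟩) = Pq.mkQ m
      congr 1
      exact Subtype.ext h1
  have hker : LinearMap.ker Φ = D.comap Λs.subtype := by
    ext w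
    simp only [LinearMap.mem_ker, Submodule.mem_comap, Submodule.subtype_apply]
    constructor
    · intro h0
      have h1 : πΛ w ∈ Dc := (Submodule.Quotient.mk_eq_zero _).mp (congrArg Prod.fst h0)
      have h2 : f w ∈ Pq := (Submodule.Quotient.mk_eq_zero _).mp (congrArg Prod.snd h0)
      rw [hmemD]
      refine ⟨h1, ?_⟩
      obtain ⟨c, hc⟩ := Submodule.mem_span_singleton.mp h2
      refine ⟨c, ?_⟩
      calc (((p : ℤ_[p]) * c : ℤ_[p]) : ℚ_[p])
          = ((c • (p : ℤ_[p]) : ℤ_[p]) : ℚ_[p]) := by push_cast [smul_eq_mul]; ring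
        _ = ((f w : ℤ_[p]) : ℚ_[p]) := congrArg (fun z : ℤ_[p] => (z : ℚ_[p])) hc
        _ = ψ w.1 := rfl
    · intro hD'
      obtain ⟨hπD₀, c, hc⟩ := (hmemD w.1).mp hD'
      have h1 : πΛ w ∈ Dc := hπD₀
      have h2 : f w ∈ Pq := Submodule.mem_span_singleton.mpr ⟨c, Subtype.ext (by
        show ((c • (p : ℤ_[p]) : ℤ_[p]) : ℚ_[p]) = ψ w.1
        rw [← hc]; push_cast [smul_eq_mul]; ring)⟩
      apply Prod.ext
      · exact (Submodule.Quotient.mk_eq_zero _).mpr h1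
      · exact (Submodule.Quotient.mk_eq_zero _).mpr h2
  have e1 : (↥Λs ⧸ (D.comap Λs.subtype)) ≃ₗ[ℤ_[p]] (↥Λs ⧸ LinearMap.ker Φ) :=
    Submodule.quotEquivOfEq _ _ hker.symm
  have e2 : (↥Λs ⧸ LinearMap.ker Φ) ≃ₗ[ℤ_[p]] ((↥Λ ⧸ Dc) × (ℤ_[p] ⧸ Pq)) :=
    Φ.quotKerEquivOfSurjective hsurj
  rw [Nat.card_congr (e1.trans e2).toEquiv, Nat.card_prod, ht, card_quot_span_p, pow_succ]
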